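/- Let n, p ≥ 1 and define the model M_{n,p} of dimension n + p by M_{n,p}(e) = true if and only if e i = true for all i < n, or e i = true for all i ≥ n. Let e₂ be the partial instance with e₂ i = none for i < n and e₂ i = some true for i ≥ n. Then e₂ is a minimum sufficient reason for the all-ones total instance 1^{n+p} over M_{n,p} if and only if p ≤ n. -/
import Mathlib


abbrev PI (n : ℕ) : Type := Fin n → Option Bool

def Subs {n : ℕ} (e e' : PI n) : Prop := ∀ i, e i ≠ none → e' i = e i

noncomputable def undefCard {n : ℕ} (e : PI n) : ℕ := Set.ncard {i | e i = none}

/-- `e'` is a sufficient reason for the total instance `e` over the model `M`: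
`e' ⊑ e` and every completion of `e'` gets the same classification as `e`. -/
def IsSR {d : ℕ} (M : (Fin d → Bool) → Bool) (e : Fin d → Bool) (e' : PI d) : Prop :=
  Subs e' (fun i => some (e i)) ∧
    ∀ c : Fin d → Bool, Subs e' (fun i => some (c i)) → M c = M e

/-- `e'` is a minimum sufficient reason for `e` over `M`: it is an SR and no SR for `e`
over `M` has strictly more undefined features. -/
def IsMinimumSR {d : ℕ} (M : (Fin d → Bool) → Bool) (e : Fin d → Bool) (e' : PI d) : Prop :=
  IsSR M e e' ∧ ∀ e'' : PI d, IsSR M e e'' → undefCard e'' ≤ undefCard e'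

/-- The model `M_{n,p}` of dimension `n + p`: an instance is positive iff its first `n`
features are all `true` or its last `p` features are all `true`. -/
def Mnp (n p : ℕ) : (Fin (n + p) → Bool) → Bool :=
  fun e => decide (∀ i : Fin (n + p), (i : ℕ) < n → e i = true)
        || decide (∀ i : Fin (n + p), n ≤ (i : ℕ) → e i = true)

lemma set_lt_eq (n p : ℕ) :
    {i : Fin (n+p) | (i:ℕ) < n} = Set.range (Fin.castAdd p) := by
  ext i
  simp only [Set.mem_setOf_eq, Set.mem_range]
  constructor
  · intro h; exact ⟨⟨(i:ℕ), h⟩, by ext; simp⟩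
  · rintro ⟨j, rfl⟩; exact j.isLt

lemma set_ge_eq (n p : ℕ) :
    {i : Fin (n+p) | n ≤ (i:ℕ)} = Set.range (Fin.natAdd n) := by
  ext i
  simp only [Set.mem_setOf_eq, Set.mem_range]
  constructor
  · intro h
    refine ⟨⟨(i:ℕ) - n, by have := i.isLt; omega⟩, ?_⟩
    · ext; simp [Fin.natAdd]; omega
  · rintro ⟨j, rfl⟩; simp [Fin.natAdd]

lemma ncard_lt (n p : ℕ) : Set.ncard {i : Fin (n+p) | (i:ℕ) < n} = n := by
  rw [set_lt_eq, ← Set.image_univ,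
    Set.ncard_image_of_injective _ (Fin.castAdd_injective n p), Set.ncard_univ,
    Nat.card_eq_fintype_card, Fintype.card_fin]

lemma ncard_ge (n p : ℕ) : Set.ncard {i : Fin (n+p) | n ≤ (i:ℕ)} = p := by
  rw [set_ge_eq, ← Set.image_univ,
    Set.ncard_image_of_injective _ (fun a b hab => by
      have := congrArg Fin.val hab; simp [Fin.natAdd] at this; exact Fin.ext this), Set.ncard_univ,
    Nat.card_eq_fintype_card, Fintype.card_fin]

theorem stmt13 (n p : ℕ) (hn : 1 ≤ n) (hp : 1 ≤ p) :
    IsMinimumSR (Mnp n p) (fun _ => true)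
        (fun i : Fin (n + p) => if (i : ℕ) < n then none else some true) ↔ p ≤ n := by
  have hM1 : Mnp n p (fun _ => true) = true := by simp [Mnp]
  have hcard2 : undefCard (fun i : Fin (n + p) =>
      if (i : ℕ) < n then none else some true) = n := by
    have : {i : Fin (n+p) | (if (i:ℕ) < n then (none : Option Bool) else some true) = none}
        = {i : Fin (n+p) | (i:ℕ) < n} := by
      ext i; by_cases h : (i:ℕ) < n <;> simp [h]
    rw [undefCard, this, ncard_lt]
  constructor
  · intro h
    have hSR3 : IsSR (Mnp n p) (fun _ => true)
        (fun i : Fin (n + p) => if (i : ℕ) < n then some true else none) := by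
      constructor
      · intro i hi; by_cases h : (i:ℕ) < n <;> simp_all
      · intro c hc
        have hall : ∀ i : Fin (n+p), (i:ℕ) < n → c i = true := by
          intro i hi
          have := hc i (by simp [hi])
          simp [hi] at this
          exact this
        rw [hM1]
        simp only [Mnp, Bool.or_eq_true, decide_eq_true_eq]
        exact Or.inl hall
    have hle := h.2 _ hSR3
    have hcard3 : undefCard (fun i : Fin (n + p) =>
        if (i : ℕ) < n then some true else none) = p := by
      have : {i : Fin (n+p) | (if (i:ℕ) < n then some true else (none : Option Bool)) = none}
          = {i : Fin (n+p) | n ≤ (i:ℕ)} := by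
        ext i; by_cases h : (i:ℕ) < n <;> simp [h] <;> omega
      rw [undefCard, this, ncard_ge]
    rw [hcard3, hcard2] at hle
    exact hle
  · intro hpn
    constructor
    · constructor
      · intro i hi; by_cases h : (i:ℕ) < n <;> simp_all
      · intro c hc
        have hall : ∀ i : Fin (n+p), n ≤ (i:ℕ) → c i = true := by
          intro i hi
          have hni : ¬ (i:ℕ) < n := not_lt.mpr hi
          have := hc i (by simp [hni])
          simp [hni] at this
          exact this
        rw [hM1]
        simp only [Mnp, Bool.or_eq_true, decide_eq_true_eq]
        exact Or.inr hall
    · intro e'' hSR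
      rw [hcard2]
      have key : (∀ i : Fin (n+p), (i:ℕ) < n → e'' i ≠ none) ∨
          (∀ i : Fin (n+p), n ≤ (i:ℕ) → e'' i ≠ none) := by
        by_contra hcon
        push_neg at hcon
        obtain ⟨⟨i, hi, hie⟩, ⟨j, hj, hje⟩⟩ := hcon
        set c : Fin (n+p) → Bool := fun k => (e'' k).getD false with hc
        have hsub : Subs e'' (fun k => some (c k)) := by
          intro k hk
          cases h : e'' k with
          | none => exact absurd h hk
          | some b => simp [hc, h]
        have hMc := hSR.2 c hsub
        rw [hM1] at hMc
        simp only [Mnp, Bool.or_eq_true, decide_eq_true_eq] at hMc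
        rcases hMc with h | h
        · have := h i hi; simp [hc, hie] at this
        · have := h j hj; simp [hc, hje] at this
      rcases key with h | h
      · have hsub : {i : Fin (n+p) | e'' i = none} ⊆ {i : Fin (n+p) | n ≤ (i:ℕ)} := by
          intro i hi
          by_contra hni
          simp only [Set.mem_setOf_eq, not_le] at hni
          exact h i hni hi
        calc undefCard e'' ≤ Set.ncard {i : Fin (n+p) | n ≤ (i:ℕ)} :=
              Set.ncard_le_ncard hsub (Set.toFinite _)
          _ = p := ncard_ge n p
          _ ≤ n := hpn
      · have hsub : {i : Fin (n+p) | e'' i = none} ⊆ {i : Fin (n+p) | (i:ℕ) < n} := by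
          intro i hi
          by_contra hni
          simp only [Set.mem_setOf_eq, not_lt] at hni
          exact h i hni hi
        calc undefCard e'' ≤ Set.ncard {i : Fin (n+p) | (i:ℕ) < n} :=
              Set.ncard_le_ncard hsub (Set.toFinite _)
          _ = n := ncard_lt n p
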